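/- Let g, h : ℝⁿ → ℝ be strongly convex with modulus σ > 0 and assume φ := g − h is bounded below. Let ρ > 0 and let sequences (x^k), (y^k), (w^k) in ℝⁿ, stepsizes t_k > 0 and parameters ν_k ≥ 0 satisfy, for every k: w^k ∈ ∂h(x^k), w^k ∈ ∂g(y^k), d^k := y^k − x^k, x^{k+1} = y^k + t_k d^k, and φ(x^{k+1}) ≤ φ(y^k) − ρ t_k² ‖d^k‖² + ν_k. If ∑_{k=0}^{∞} ν_k < ∞, then ∑_{k=0}^{∞} ‖d^k‖² < ∞ (so ‖d^k‖ → 0), and every cluster point of (x^k) is a critical point of φ, i.e. for every cluster point x̄ there exists w̄ ∈ ∂g(x̄) ∩ ∂h(x̄). -/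

import Mathlib

open Set Filter Topology

noncomputable section

/-- The (convex-analysis) subdifferential of `f` at `x`:
the set of `w` with `f z ≥ f x + ⟨w, z - x⟩` for all `z`. -/
def subdiff {n : ℕ} (f : EuclideanSpace ℝ (Fin n) → ℝ) (x : EuclideanSpace ℝ (Fin n)) :
    Set (EuclideanSpace ℝ (Fin n)) :=
  {w | ∀ z, f x + (inner ℝ w (z - x) : ℝ) ≤ f z}

/-- `f` is strongly convex with modulus `σ`. -/
def StrongConvexWith {n : ℕ} (σ : ℝ) (f : EuclideanSpace ℝ (Fin n) → ℝ) : Prop :=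
  ∀ x y : EuclideanSpace ℝ (Fin n), ∀ t : ℝ, 0 < t → t < 1 →
    f (t • x + (1 - t) • y) ≤ t * f x + (1 - t) * f y - σ / 2 * (t * (1 - t) * ‖x - y‖ ^ 2)

lemma strong_subgrad {n : ℕ} {σ : ℝ} (hσ : 0 < σ) {f : EuclideanSpace ℝ (Fin n) → ℝ}
    (hf : StrongConvexWith σ f) {x w : EuclideanSpace ℝ (Fin n)} (hw : w ∈ subdiff f x)
    (z : EuclideanSpace ℝ (Fin n)) :
    f x + (inner ℝ w (z - x) : ℝ) + σ / 2 * ‖z - x‖ ^ 2 ≤ f z := by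
  set c : ℝ := σ / 2 * ‖z - x‖ ^ 2 with hc
  have hc0 : 0 ≤ c := by positivity
  refine le_of_forall_pos_le_add fun ε hε => ?_
  set t : ℝ := min (1/2) (ε / (c + 1)) with htdef
  have ht0 : 0 < t := lt_min (by norm_num) (by positivity)
  have ht1 : t < 1 := lt_of_le_of_lt (min_le_left _ _) (by norm_num)
  have htc : t * c ≤ ε := by
    have h1 : t ≤ ε / (c + 1) := min_le_right _ _
    have h2 : t * c ≤ (ε / (c + 1)) * c := by nlinarith
    have h3 : (ε / (c + 1)) * c ≤ ε := by
      rw [div_mul_eq_mul_div, div_le_iff₀ (by linarith)]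
      nlinarith
    linarith
  have hsub := hw (t • z + (1 - t) • x)
  have heq : t • z + (1 - t) • x - x = t • (z - x) := by
    rw [sub_smul, one_smul, smul_sub]; abel
  rw [heq, real_inner_smul_right] at hsub
  have hst := hf z x t ht0 ht1
  have key : t * (f x + (inner ℝ w (z - x) : ℝ) + (1 - t) * c) ≤ t * f z := by
    have : σ / 2 * (t * (1 - t) * ‖z - x‖ ^ 2) = t * ((1 - t) * c) := by rw [hc]; ring
    nlinarith [hsub, hst]
  have key2 : f x + (inner ℝ w (z - x) : ℝ) + (1 - t) * c ≤ f z :=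
    le_of_mul_le_mul_left (by linarith) ht0
  nlinarith

lemma sc_convex {n : ℕ} {σ : ℝ} (hσ : 0 < σ) {f : EuclideanSpace ℝ (Fin n) → ℝ}
    (hf : StrongConvexWith σ f) : ConvexOn ℝ univ f := by
  refine ⟨convex_univ, fun p _ q _ a b ha hb hab => ?_⟩
  rcases eq_or_lt_of_le ha with h | h
  · have hb1 : b = 1 := by linarith
    simp [← h, hb1]
  · rcases eq_or_lt_of_le hb with h' | h'
    · have ha1 : a = 1 := by linarith
      simp [← h', ha1]
    · have hb' : b = 1 - a := by linarith
      have := hf p q a h (by linarith)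
      have hpos : 0 ≤ σ / 2 * (a * (1 - a) * ‖p - q‖ ^ 2) := by
        have : 0 < 1 - a := by linarith
        positivity
      rw [hb']
      simp only [smul_eq_mul]
      nlinarith

lemma sc_continuous {n : ℕ} {σ : ℝ} (hσ : 0 < σ) {f : EuclideanSpace ℝ (Fin n) → ℝ}
    (hf : StrongConvexWith σ f) : Continuous f := by
  have := (sc_convex hσ hf).continuousOn isOpen_univ
  rw [← continuousOn_univ]
  exact this

set_option maxHeartbeats 1000000 in
theorem stmt10 {n : ℕ} (g h : EuclideanSpace ℝ (Fin n) → ℝ) (σ ρ : ℝ)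
    (hσ : 0 < σ) (hρ : 0 < ρ)
    (hgs : StrongConvexWith σ g) (hhs : StrongConvexWith σ h)
    (hbd : BddBelow (Set.range fun z => g z - h z))
    (x y w : ℕ → EuclideanSpace ℝ (Fin n)) (t ν : ℕ → ℝ)
    (ht : ∀ k, 0 < t k) (hν : ∀ k, 0 ≤ ν k)
    (hwh : ∀ k, w k ∈ subdiff h (x k)) (hwg : ∀ k, w k ∈ subdiff g (y k))
    (hstep : ∀ k, x (k + 1) = y k + t k • (y k - x k))
    (hls : ∀ k, g (x (k + 1)) - h (x (k + 1)) ≤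
      (g (y k) - h (y k)) - ρ * t k ^ 2 * ‖y k - x k‖ ^ 2 + ν k)
    (hsum : Summable ν) :
    Summable (fun k => ‖y k - x k‖ ^ 2) ∧
      (∀ xbar : EuclideanSpace ℝ (Fin n),
        (∃ φ : ℕ → ℕ, StrictMono φ ∧
          Filter.Tendsto (fun ℓ => x (φ ℓ)) Filter.atTop (nhds xbar)) →
        ∃ wbar, wbar ∈ subdiff g xbar ∩ subdiff h xbar) := by
  set Φ : ℕ → ℝ := fun k => g (x k) - h (x k) with hΦ
  obtain ⟨m, hm⟩ := hbd
  have hmΦ : ∀ k, m ≤ Φ k := fun k => hm ⟨x k, rfl⟩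
  -- key decrease inequality
  have key : ∀ k, σ * ‖y k - x k‖ ^ 2 ≤ Φ k - Φ (k + 1) + ν k := by
    intro k
    have A1 := strong_subgrad hσ hhs (hwh k) (y k)
    have A2 := strong_subgrad hσ hgs (hwg k) (x k)
    have e1 : (inner ℝ (w k) (x k - y k) : ℝ) = -(inner ℝ (w k) (y k - x k) : ℝ) := by
      rw [← inner_neg_right, neg_sub]
    have e2 : ‖x k - y k‖ = ‖y k - x k‖ := norm_sub_rev _ _
    rw [e1, e2] at A2
    have hpos : (0:ℝ) ≤ ρ * t k ^ 2 * ‖y k - x k‖ ^ 2 := by positivity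
    have := hls k
    simp only [hΦ]
    linarith
  -- summability
  have hν' : ∀ N, ∑ i ∈ Finset.range N, ν i ≤ ∑' i, ν i :=
    fun N => Summable.sum_le_tsum (Finset.range N) (fun i _ => hν i) hsum
  have hsum1 : Summable (fun k => σ * ‖y k - x k‖ ^ 2) := by
    apply summable_of_sum_range_le (c := Φ 0 - m + ∑' i, ν i)
      (fun k => by positivity)
    intro N
    calc ∑ i ∈ Finset.range N, σ * ‖y i - x i‖ ^ 2
        ≤ ∑ i ∈ Finset.range N, (Φ i - Φ (i + 1) + ν i) :=
          Finset.sum_le_sum fun i _ => key i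
      _ = (Φ 0 - Φ N) + ∑ i ∈ Finset.range N, ν i := by
          rw [Finset.sum_add_distrib, Finset.sum_range_sub' Φ N]
      _ ≤ Φ 0 - m + ∑' i, ν i := by
          have := hmΦ N; have := hν' N; linarith
  have hsumd : Summable (fun k => ‖y k - x k‖ ^ 2) := by
    have := hsum1.mul_left σ⁻¹
    refine this.congr fun k => ?_
    field_simp
  refine ⟨hsumd, ?_⟩
  intro xbar ⟨ψ, hψ, hx⟩
  -- d k → 0
  have hd2 : Tendsto (fun k => ‖y k - x k‖ ^ 2) atTop (𝓝 0) := hsumd.tendsto_atTop_zero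
  have hdn : Tendsto (fun k => ‖y k - x k‖) atTop (𝓝 0) := by
    have := (Real.continuous_sqrt.tendsto 0).comp hd2
    simp only [Function.comp_def, Real.sqrt_sq (norm_nonneg _), Real.sqrt_zero] at this
    exact this
  have hd0 : Tendsto (fun k => y k - x k) atTop (𝓝 0) :=
    tendsto_zero_iff_norm_tendsto_zero.mpr hdn
  have hψt : Tendsto ψ atTop atTop := hψ.tendsto_atTop
  have hy : Tendsto (fun ℓ => y (ψ ℓ)) atTop (𝓝 xbar) := by
    have h1 : Tendsto (fun ℓ => x (ψ ℓ) + (y (ψ ℓ) - x (ψ ℓ))) atTop (𝓝 (xbar + 0)) :=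
      hx.add ((hd0.comp hψt))
    simpa using h1
  -- continuity of g and h
  have hgc : Continuous g := sc_continuous hσ hgs
  have hhc : Continuous h := sc_continuous hσ hhs
  -- bound on w along the subsequence
  obtain ⟨zM, hzM, hMax⟩ := (isCompact_closedBall xbar 2).exists_isMaxOn
    ⟨xbar, by simp⟩ hgc.continuousOn
  obtain ⟨zm, hzm, hMin⟩ := (isCompact_closedBall xbar 2).exists_isMinOn
    ⟨xbar, by simp⟩ hgc.continuousOn
  set C : ℝ := g zM - g zm with hC
  have hC0 : 0 ≤ C := by
    have h1 : g xbar ≤ g zM := hMax (by simp)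
    have h2 : g zm ≤ g xbar := hMin (by simp)
    simp only [hC]; linarith
  have hwbd : ∀ k, ‖y k - xbar‖ ≤ 1 → ‖w k‖ ≤ C := by
    intro k hk
    by_cases hw0 : w k = 0
    · simp [hw0, hC0]
    · have hnw : (0:ℝ) < ‖w k‖ := norm_pos_iff.mpr hw0
      set u := ‖w k‖⁻¹ • (w k) with hu
      have hnu : ‖u‖ = 1 := by
        rw [hu, norm_smul, norm_inv, norm_norm, inv_mul_cancel₀ hnw.ne']
      have := hwg k (y k + u)
      have e1 : y k + u - y k = u := by abel
      rw [e1, hu, real_inner_smul_right, real_inner_self_eq_norm_sq] at this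
      have e2 : ‖w k‖⁻¹ * ‖w k‖ ^ 2 = ‖w k‖ := by field_simp
      rw [e2] at this
      have hy1 : y k ∈ Metric.closedBall xbar 2 := by
        rw [Metric.mem_closedBall, dist_eq_norm]; linarith
      have hy2 : y k + u ∈ Metric.closedBall xbar 2 := by
        rw [Metric.mem_closedBall, dist_eq_norm]
        calc ‖y k + u - xbar‖ ≤ ‖y k - xbar‖ + ‖u‖ := by
              rw [add_sub_right_comm]; exact norm_add_le _ _
          _ ≤ 2 := by rw [hnu]; linarith
      have h1 : g (y k + u) ≤ g zM := hMax hy2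
      have h2 : g zm ≤ g (y k) := hMin hy1
      simp only [hC]; linarith
  -- eventually in ball
  have hev : ∀ᶠ ℓ in atTop, ‖y (ψ ℓ) - xbar‖ ≤ 1 := by
    have := hy (Metric.closedBall_mem_nhds xbar one_pos)
    filter_upwards [this] with ℓ hℓ
    simpa [Metric.mem_closedBall, dist_eq_norm] using hℓ
  obtain ⟨L, hL⟩ := eventually_atTop.mp hev
  -- Bolzano–Weierstrass
  have hmem : ∀ ℓ, w (ψ (ℓ + L)) ∈ Metric.closedBall (0 : EuclideanSpace ℝ (Fin n)) C := by
    intro ℓ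
    rw [Metric.mem_closedBall, dist_zero_right]
    exact hwbd _ (hL (ℓ + L) (Nat.le_add_left _ _))
  obtain ⟨wbar, -, θ, hθ, hwlim⟩ :=
    (isCompact_closedBall (0 : EuclideanSpace ℝ (Fin n)) C).tendsto_subseq hmem
  set j : ℕ → ℕ := fun ℓ => ψ (θ ℓ + L) with hj
  have hjt : Tendsto (fun ℓ => θ ℓ + L) atTop atTop :=
    (strictMono_nat_of_lt_succ fun ℓ => by
      have : θ ℓ < θ (ℓ+1) := hθ (by omega); omega).tendsto_atTop
  have hxj : Tendsto (fun ℓ => x (j ℓ)) atTop (𝓝 xbar) := hx.comp hjt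
  have hyj : Tendsto (fun ℓ => y (j ℓ)) atTop (𝓝 xbar) := hy.comp hjt
  have hwj : Tendsto (fun ℓ => w (j ℓ)) atTop (𝓝 wbar) := hwlim
  refine ⟨wbar, ?_, ?_⟩
  · intro z
    have hlim : Tendsto (fun ℓ => g (y (j ℓ)) + (inner ℝ (w (j ℓ)) (z - y (j ℓ)) : ℝ))
        atTop (𝓝 (g xbar + (inner ℝ wbar (z - xbar) : ℝ))) :=
      ((hgc.tendsto xbar).comp hyj).add (hwj.inner (tendsto_const_nhds.sub hyj))
    exact le_of_tendsto hlim (Eventually.of_forall fun ℓ => hwg (j ℓ) z)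
  · intro z
    have hlim : Tendsto (fun ℓ => h (x (j ℓ)) + (inner ℝ (w (j ℓ)) (z - x (j ℓ)) : ℝ))
        atTop (𝓝 (h xbar + (inner ℝ wbar (z - xbar) : ℝ))) :=
      ((hhc.tendsto xbar).comp hxj).add (hwj.inner (tendsto_const_nhds.sub hxj))
    exact le_of_tendsto hlim (Eventually.of_forall fun ℓ => hwh (j ℓ) z)
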